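/- Let n ≥ 1 and let y ∈ ℂ \ [-1, 0]. Then there exists ξ ∈ ℂ with ξ² = y(y+1) and Re(ξ/y) > 0. -/

import Mathlib

open Complex

/-- For `y ∈ ℂ \ [-1,0]` there is a square root `ξ` of `y(y+1)` with `Re(ξ/y) > 0`. -/
theorem exists_sqrt_re_pos (y : ℂ)
    (hy : y ∉ (fun r : ℝ => (r : ℂ)) '' Set.Icc (-1 : ℝ) 0) :
    ∃ ξ : ℂ, ξ ^ 2 = y * (y + 1) ∧ 0 < (ξ / y).re := by
  have hy0 : y ≠ 0 := by
    rintro rfl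
    exact hy ⟨0, by norm_num, by norm_num⟩
  have hy1 : y + 1 ≠ 0 := by
    intro h
    apply hy
    refine ⟨-1, by norm_num, ?_⟩
    push_cast
    linear_combination -h
  set w : ℂ := (y + 1) / y with hwdef
  have hw0 : w ≠ 0 := div_ne_zero hy1 hy0
  set z : ℂ := w ^ ((2 : ℕ) : ℂ)⁻¹ with hzdef
  have hz2 : z ^ 2 = w := Complex.cpow_nat_inv_pow w two_ne_zero
  have hz0 : z ≠ 0 := by
    intro h
    rw [h] at hz2
    simp at hz2
    exact hw0 hz2.symm
  have hzre : z.re ≠ 0 := by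
    intro h
    -- then w = z^2 is a nonpositive real, and y ∈ [-1,0]
    have him : z.im ≠ 0 := by
      intro h'
      exact hz0 (Complex.ext h h')
    have hwre : w.re = -(z.im ^ 2) := by
      rw [← hz2]
      simp [pow_two, Complex.mul_re, h]
    have hwim : w.im = 0 := by
      rw [← hz2]
      simp [pow_two, Complex.mul_im, h]
    -- y = (w - 1)⁻¹
    have hyw : y = (w - 1)⁻¹ := by
      rw [hwdef]
      field_simp
      ring
    have hwre1 : w - 1 = ((w.re - 1 : ℝ) : ℂ) := by
      apply Complex.ext <;> simp [hwim]
    apply hy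
    refine ⟨(w.re - 1)⁻¹, ⟨?_, ?_⟩, ?_⟩
    · rw [hwre]
      rw [neg_le, ← inv_neg]
      have h1 : (0:ℝ) < z.im ^ 2 + 1 := by positivity
      rw [show -(-(z.im ^ 2) - 1) = z.im ^ 2 + 1 by ring]
      rw [inv_le_one_iff₀]
      right
      nlinarith
    · rw [hwre]
      have h1 : (0:ℝ) < z.im ^ 2 + 1 := by positivity
      have : -(z.im ^ 2) - 1 < 0 := by nlinarith
      exact le_of_lt (inv_lt_zero.mpr this)
    · simp only
      rw [hyw, hwre1]
      push_cast
      ring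
  have hkey : ∀ ξ : ℂ, ξ = y * z ∨ ξ = y * (-z) → ξ ^ 2 = y * (y + 1) := by
    have hzw : ∀ ξ : ℂ, ξ ^ 2 = w → (y * ξ) ^ 2 = y * (y + 1) := by
      intro ξ hξ
      rw [mul_pow, hξ, hwdef]
      field_simp
    rintro ξ (rfl | rfl)
    · exact hzw z hz2
    · exact hzw (-z) (by rw [neg_pow]; simpa using hz2)
  rcases lt_or_gt_of_ne hzre with hneg | hpos
  · refine ⟨y * (-z), hkey _ (Or.inr rfl), ?_⟩
    rw [mul_comm, mul_div_assoc, div_self hy0, mul_one]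
    simpa using hneg
  · refine ⟨y * z, hkey _ (Or.inl rfl), ?_⟩
    rw [mul_comm, mul_div_assoc, div_self hy0, mul_one]
    exact hpos
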